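/- (Instability counterexample) Let Y be a Hilbert space, y ∈ Y with ‖y‖ = 1, δₙ ↓ 0 positive, yₙ = (1+δₙ)y, α > 0, and D(y₀, y₁) = H(y₁)‖y₀−y₁‖² with H as above. Then the unique minimizer of x ↦ D(x, yₙ) + α‖x‖² is xₙ = yₙ/(1 + α/2), the unique minimizer of x ↦ D(x, y) + α‖x‖² is x‡ = y/(1+α), and xₙ → y/(1 + α/2) ≠ x‡. In particular, minimizers do not depend stably on the data despite D satisfying a quasi triangle inequality. -/

import Mathlib

open Filter Topology

lemma quad_min_aux {Y : Type*} [NormedAddCommGroup Y] [InnerProductSpace ℝ Y]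
    (c α : ℝ) (hc : 0 < c) (hα : 0 < α) (w z : Y)
    (hz : z ≠ (c / (c + α)) • w) :
    c * ‖(c / (c + α)) • w - w‖ ^ 2 + α * ‖(c / (c + α)) • w‖ ^ 2
      < c * ‖z - w‖ ^ 2 + α * ‖z‖ ^ 2 := by
  have hca : 0 < c + α := by linarith
  set s := c / (c + α) with hs
  have hspos : 0 < s := by positivity
  have h1 : ‖z - w‖ ^ 2 = ‖z‖ ^ 2 - 2 * (inner ℝ z w : ℝ) + ‖w‖ ^ 2 :=
    norm_sub_sq_real z w
  have h2 : ‖z - s • w‖ ^ 2 = ‖z‖ ^ 2 - 2 * (s * (inner ℝ z w : ℝ)) + s ^ 2 * ‖w‖ ^ 2 := by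
    rw [norm_sub_sq_real, real_inner_smul_right, norm_smul, Real.norm_eq_abs,
      abs_of_pos hspos]
    ring
  have h3 : ‖s • w - w‖ ^ 2 = (s - 1) ^ 2 * ‖w‖ ^ 2 := by
    have : s • w - w = (s - 1) • w := by rw [sub_smul, one_smul]
    rw [this, norm_smul, Real.norm_eq_abs, mul_pow, sq_abs]
  have h4 : ‖s • w‖ ^ 2 = s ^ 2 * ‖w‖ ^ 2 := by
    rw [norm_smul, Real.norm_eq_abs, mul_pow, sq_abs]
  have hid : c * ‖z - w‖ ^ 2 + α * ‖z‖ ^ 2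
      = (c * ‖s • w - w‖ ^ 2 + α * ‖s • w‖ ^ 2) + (c + α) * ‖z - s • w‖ ^ 2 := by
    rw [h1, h2, h3, h4, hs]
    field_simp
    ring
  have hpos : 0 < (c + α) * ‖z - s • w‖ ^ 2 := by
    have : z - s • w ≠ 0 := sub_ne_zero.mpr hz
    have h := norm_pos_iff.mpr this
    positivity
  linarith [hid]

theorem instability_counterexample
    {Y : Type*} [NormedAddCommGroup Y] [InnerProductSpace ℝ Y]
    (H : Y → ℝ) (hH : ∀ y, H y = if ‖y‖ ≤ 1 then 1 else 2)
    (D : Y → Y → ℝ) (hD : ∀ y₀ y₁, D y₀ y₁ = H y₁ * ‖y₀ - y₁‖ ^ 2)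
    (y : Y) (hy : ‖y‖ = 1)
    (δ : ℕ → ℝ) (hδpos : ∀ n, 0 < δ n) (hδanti : Antitone δ)
    (hδ0 : Tendsto δ atTop (nhds 0))
    (yseq : ℕ → Y) (hyseq : ∀ n, yseq n = (1 + δ n) • y)
    (α : ℝ) (hα : 0 < α)
    (x : ℕ → Y) (hx : ∀ n, x n = (1 + α / 2)⁻¹ • yseq n)
    (xdag : Y) (hxdag : xdag = (1 + α)⁻¹ • y) :
    (∀ n, ∀ z : Y, z ≠ x n →
      D (x n) (yseq n) + α * ‖x n‖ ^ 2 < D z (yseq n) + α * ‖z‖ ^ 2) ∧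
    (∀ z : Y, z ≠ xdag → D xdag y + α * ‖xdag‖ ^ 2 < D z y + α * ‖z‖ ^ 2) ∧
    Tendsto x atTop (nhds ((1 + α / 2)⁻¹ • y)) ∧
    (1 + α / 2)⁻¹ • y ≠ xdag := by
  have hy0 : y ≠ 0 := by
    intro h; rw [h, norm_zero] at hy; norm_num at hy
  have hnorm : ∀ n, ‖yseq n‖ = 1 + δ n := by
    intro n
    rw [hyseq n, norm_smul, Real.norm_eq_abs, hy,
      abs_of_pos (by linarith [hδpos n]), mul_one]
  have hHn : ∀ n, H (yseq n) = 2 := by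
    intro n
    rw [hH, if_neg]
    rw [hnorm n]
    linarith [hδpos n]
  have hHy : H y = 1 := by rw [hH, hy]; simp
  refine ⟨?_, ?_, ?_, ?_⟩
  · intro n z hz
    have hxn : x n = (2 / (2 + α)) • yseq n := by
      rw [hx n]
      congr 1
      rw [eq_div_iff (by linarith)]
      field_simp
    have key := quad_min_aux 2 α (by norm_num) hα (yseq n) z (by rwa [← hxn])
    rw [hD, hD, hHn n, hxn]
    exact key
  · intro z hz
    have hxd : xdag = (1 / (1 + α)) • y := by rw [hxdag, one_div]
    have key := quad_min_aux 1 α (by norm_num) hα y z (by rwa [← hxd])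
    rw [hD, hD, hHy, hxd]
    simpa using key
  · have h1 : Tendsto (fun n => (1 + α / 2)⁻¹ * (1 + δ n)) atTop
        (nhds ((1 + α / 2)⁻¹ * 1)) := by
      apply Tendsto.const_mul
      simpa using hδ0.const_add 1
    have h2 := h1.smul_const y
    rw [mul_one] at h2
    convert h2 using 2 with n
    rw [hx n, hyseq n, smul_smul]
  · rw [hxdag]
    intro h
    have hinj : (1 + α / 2)⁻¹ = (1 + α)⁻¹ := by
      have := sub_eq_zero.mpr h
      rw [← sub_smul] at this
      rcases smul_eq_zero.mp this with h' | h'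
      · exact sub_eq_zero.mp h'
      · exact absurd h' hy0
    have h1 : (0:ℝ) < 1 + α / 2 := by linarith
    have h2 : (0:ℝ) < 1 + α := by linarith
    have := inv_injective hinj
    linarith
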